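/- Let n > 1 be odd and k ≥ 1. The polynomial B_n(x), defined over GF(2^{nk}) by B_1 = B_2 = 1 and B_{i+2}(x) = B_{i+1}(x) + x^{2^{ik}} B_i(x), has exactly (2^{(n-1)k} - 1)/(2^{2k} - 1) distinct zeros in GF(2^{nk}). -/

import Mathlib

set_option linter.unusedSectionVars false
set_option maxHeartbeats 1000000

open Finset Polynomial

/-- The polynomials `B_i` from the paper. -/
def B {F : Type*} [Field F] (k : ℕ) (x : F) : ℕ → F
  | 0 => 1
  | 1 => 1
  | 2 => 1
  | i + 3 => B k x (i + 2) + x ^ (2 ^ ((i + 1) * k)) * B k x (i + 1)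

namespace Stmt2Aux

/-- polynomial "q-th root" of B -/
noncomputable def Pol (k : ℕ) (F : Type*) [Field F] : ℕ → Polynomial F
  | 0 => 1
  | 1 => 1
  | 2 => 1
  | i + 3 => Pol k F (i + 2) + Polynomial.X ^ (2 ^ (i * k)) * Pol k F (i + 1)

variable {F : Type*} [Field F]

lemma B_eq_pol (k : ℕ) (x : F) [CharP F 2] :
    ∀ i, B k x i = (Pol k F i).eval x ^ (2 ^ k) := by
  have key : ∀ i, (B k x i = (Pol k F i).eval x ^ (2 ^ k)) ∧
      (B k x (i+1) = (Pol k F (i+1)).eval x ^ (2 ^ k)) ∧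
      (B k x (i+2) = (Pol k F (i+2)).eval x ^ (2 ^ k)) := by
    intro i
    induction i with
    | zero => refine ⟨?_, ?_, ?_⟩ <;> simp [B, Pol]
    | succ m ih =>
      obtain ⟨h0, h1, h2⟩ := ih
      refine ⟨h1, h2, ?_⟩
      show B k x (m + 3) = (Pol k F (m+3)).eval x ^ (2^k)
      rw [show B k x (m+3) = B k x (m + 2) + x ^ (2 ^ ((m + 1) * k)) * B k x (m + 1) from rfl,
        show Pol k F (m+3) = Pol k F (m + 2) + Polynomial.X ^ (2 ^ (m * k)) * Pol k F (m + 1) from rfl]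
      rw [h1, h2]
      rw [eval_add, eval_mul, eval_pow, eval_X]
      rw [add_pow_char_pow (p := 2)]
      rw [mul_pow, ← pow_mul, ← pow_add, show m * k + k = (m+1)*k by ring]
  exact fun i => (key i).1

end Stmt2Aux

namespace Stmt2Aux2
open Stmt2Aux

/-- degree bound sequence -/
def dfun (k : ℕ) : ℕ → ℕ
  | 0 => 0
  | 1 => 0
  | 2 => 0
  | i + 3 => 2 ^ (i * k) + dfun k (i + 1)

variable {F : Type*} [Field F]

lemma pol_eval_zero (k : ℕ) : ∀ i, (Pol k F i).eval 0 = 1 := by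
  have key : ∀ i, ((Pol k F i).eval 0 = 1) ∧ ((Pol k F (i+1)).eval 0 = 1) ∧
      ((Pol k F (i+2)).eval 0 = 1) := by
    intro i
    induction i with
    | zero => refine ⟨?_, ?_, ?_⟩ <;> simp [Pol]
    | succ m ih =>
      obtain ⟨h0, h1, h2⟩ := ih
      refine ⟨h1, h2, ?_⟩
      rw [show Pol k F (m+3) = Pol k F (m + 2) + Polynomial.X ^ (2 ^ (m * k)) * Pol k F (m + 1) from rfl]
      simp [h1, h2, zero_pow (Nat.two_pow_pos (m*k)).ne']
  exact fun i => (key i).1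

lemma pol_ne_zero (k : ℕ) (i : ℕ) : Pol k F i ≠ 0 := by
  intro h
  have := pol_eval_zero (F := F) k i
  rw [h] at this
  simp at this

lemma dfun_mono (k : ℕ) : ∀ i, dfun k i ≤ dfun k (i+1) := by
  have key : ∀ i, (dfun k i ≤ dfun k (i+1)) ∧ (dfun k (i+1) ≤ dfun k (i+2)) ∧
      (dfun k (i+2) ≤ dfun k (i+3)) := by
    intro i
    induction i with
    | zero => refine ⟨le_refl _, le_refl _, ?_⟩; simp [dfun]
    | succ m ih =>
      obtain ⟨h0, h1, h2⟩ := ih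
      refine ⟨h1, h2, ?_⟩
      rw [show dfun k (m+4) = 2 ^ ((m+1) * k) + dfun k (m+2) from rfl,
        show dfun k (m+3) = 2 ^ (m * k) + dfun k (m+1) from rfl]
      have : 2 ^ (m*k) ≤ 2 ^ ((m+1)*k) := Nat.pow_le_pow_right (by norm_num) (by nlinarith)
      omega
  exact fun i => (key i).1

lemma pol_deg (k : ℕ) : ∀ i, (Pol k F i).natDegree ≤ dfun k i := by
  have key : ∀ i, ((Pol k F i).natDegree ≤ dfun k i) ∧
      ((Pol k F (i+1)).natDegree ≤ dfun k (i+1)) ∧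
      ((Pol k F (i+2)).natDegree ≤ dfun k (i+2)) := by
    intro i
    induction i with
    | zero => refine ⟨?_, ?_, ?_⟩ <;> simp [Pol, dfun]
    | succ m ih =>
      obtain ⟨h0, h1, h2⟩ := ih
      refine ⟨h1, h2, ?_⟩
      rw [show Pol k F (m+3) = Pol k F (m + 2) + Polynomial.X ^ (2 ^ (m * k)) * Pol k F (m + 1) from rfl,
        show dfun k (m+3) = 2 ^ (m * k) + dfun k (m+1) from rfl]
      refine le_trans (Polynomial.natDegree_add_le _ _) ?_
      refine max_le ?_ ?_
      · have := dfun_mono k (m+2)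
        rw [show dfun k (m+3) = 2 ^ (m * k) + dfun k (m+1) from rfl] at this
        omega
      · refine le_trans (Polynomial.natDegree_mul_le) ?_
        have : (Polynomial.X ^ (2^(m*k)) : Polynomial F).natDegree = 2^(m*k) := by
          simp
        omega
  exact fun i => (key i).1

end Stmt2Aux2

namespace Stmt2Aux2

lemma dfun_odd (k : ℕ) : ∀ m, dfun k (2*m+1) * (2^(2*k) - 1) = 2^(2*m*k) - 1 := by
  intro m
  induction m with
  | zero => simp [dfun]
  | succ m ih =>
    have h3 : 2*(m+1)+1 = (2*m) + 3 := by ring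
    rw [h3, show dfun k (2*m+3) = 2 ^ ((2*m) * k) + dfun k (2*m+1) from rfl]
    have hQ : (1:ℕ) ≤ 2^(2*k) := Nat.one_le_two_pow
    have ha : (1:ℕ) ≤ 2^(2*m*k) := Nat.one_le_two_pow
    have hc : 2^(2*m*k) * 2^(2*k) = 2^(2*(m+1)*k) := by
      rw [← pow_add]; ring_nf
    rw [Nat.add_mul, ih, Nat.mul_sub, mul_one, hc]
    have hac : 2^(2*m*k) ≤ 2^(2*(m+1)*k) := by
      rw [← hc]; exact Nat.le_mul_of_pos_right _ (by positivity)
    omega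

end Stmt2Aux2

namespace Core

variable {F : Type*} [Field F] [Fintype F]

lemma char2_rearr [CharP F 2] (a b c : F) (h : a + b = c) : a = c + b := by
  rw [← h, add_assoc, CharTwo.add_self_eq_zero, add_zero]

lemma char2_add_eq_zero [CharP F 2] (a b : F) (h : a = b) : a + b = 0 := by
  rw [h, CharTwo.add_self_eq_zero]

section Main

variable [CharP F 2] {n k : ℕ} (hn : 1 < n) (hodd : Odd n) (hk : 1 ≤ k)

-- abbreviations
variable (q : ℕ) (hq : q = 2^k) (hcard : Fintype.card F = q^n)

include hq hk in
lemma two_le_q : 2 ≤ q := by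
  subst hq; calc 2 = 2^1 := (pow_one 2).symm
  _ ≤ 2^k := Nat.pow_le_pow_right (by norm_num) hk

include hcard in
lemma pow_qn (a : F) : a ^ (q^n) = a := by rw [← hcard]; exact FiniteField.pow_card a

include hcard hodd hq hk in
lemma not_in_Fq2 {θ : F} (hθ : θ^q ≠ θ) : θ^(q^2) ≠ θ := by
  intro h2
  apply hθ
  obtain ⟨m, hm⟩ := hodd
  have heven : ∀ j, θ^(q^(2*j)) = θ := by
    intro j
    induction j with
    | zero => simp
    | succ i ih =>
      have : q^(2*(i+1)) = q^(2*i) * q^2 := by rw [← pow_add]; ring_nf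
      rw [this, pow_mul, ih, h2]
  have : θ^(q^n) = θ^q := by
    rw [hm, pow_succ, pow_mul, heven m]
  rw [pow_qn q hcard] at this
  exact this.symm

end Main
end Core

namespace Core2
open Core

variable {F : Type*} [Field F] [Fintype F]

def sf (q : ℕ) (θ : F) : F := θ^q + θ
def rf (q : ℕ) (θ : F) : F := θ^(q^2) + θ
def zf (q n : ℕ) (θ : F) : F := (sf q θ / rf q θ)^(q^(n-1))
def psi (q n : ℕ) (θ : F) : F := (zf q n θ)^(q+1) + zf q n θ

section Main

variable [CharP F 2] {n k : ℕ} (hn : 1 < n) (hodd : Odd n) (hk : 1 ≤ k)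
variable {q : ℕ} (hq : q = 2^k) (hcard : Fintype.card F = q^n)
variable {θ : F} (hθ : θ^q ≠ θ)

omit [Fintype F] in
lemma char2_ne_zero_of_ne {a b : F} (h : a ≠ b) : a + b ≠ 0 := by
  intro h0
  exact h (by rwa [CharTwo.add_eq_iff_eq_add, zero_add] at h0)

include hθ in
omit [Fintype F] in
lemma hs_ne : sf q θ ≠ 0 := char2_ne_zero_of_ne hθ

include hθ hodd hq hk hcard in
lemma hr_ne : rf q θ ≠ 0 := char2_ne_zero_of_ne (not_in_Fq2 hodd hk q hq hcard hθ)

include hn hcard in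
lemma hz_pow_q_eq : (zf q n θ)^q = sf q θ / rf q θ := by
  rw [zf, ← pow_mul, ← pow_succ, Nat.sub_add_cancel (Nat.one_le_of_lt hn)]
  exact pow_qn q hcard _

include hn hodd hq hk hcard hθ in
lemma hz_pow_q : (zf q n θ)^q * rf q θ = sf q θ := by
  rw [hz_pow_q_eq hn hcard]
  exact div_mul_cancel₀ _ (hr_ne hodd hk hq hcard hθ)

include hn hodd hq hk hcard hθ in
lemma hz_ne : zf q n θ ≠ 0 := by
  intro h
  have := hz_pow_q hn hodd hk hq hcard hθ (θ := θ)
  rw [h, zero_pow, zero_mul] at this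
  · exact hs_ne hθ this.symm
  · have := two_le_q hk q hq; omega

end Main
end Core2

namespace Core3
open Core Core2

/-- e i = (q^i - 1)/(q - 1) -/
def efun (q : ℕ) : ℕ → ℕ
  | 0 => 0
  | i + 1 => efun q i + q^i

variable {F : Type*} [Field F] [Fintype F]

section Main

variable [CharP F 2] {n k : ℕ} (hn : 1 < n) (hodd : Odd n) (hk : 1 ≤ k)
variable {q : ℕ} (hq : q = 2^k) (hcard : Fintype.card F = q^n)
variable {θ : F} (hθ : θ^q ≠ θ)

include hq hk in
lemma nat_ids : (q-1)+1 = q ∧ (q^2-1)+1 = q^2 ∧ (q-1)*(q+1) = q^2-1 ∧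
    (q^2-q) + (q+1) = q^2+1 ∧ 2 ≤ q := by
  have h2 : 2 ≤ q := two_le_q hk q hq
  obtain ⟨j, rfl⟩ : ∃ j, q = j+2 := ⟨q-2, by omega⟩
  have e1 : (j+2)^2 = j*j+4*j+4 := by ring
  have e2 : (j+2-1)*(j+2+1) = j*j+4*j+3 := by
    rw [show j+2-1 = j+1 from rfl]; ring
  refine ⟨by omega, by omega, by omega, by omega, by omega⟩

include hθ hq hk in
omit [Fintype F] in
lemma theta_ne : θ ≠ 0 := by
  intro h
  apply hθ
  rw [h, zero_pow]
  have := two_le_q hk q hq; omega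

include hθ hq hk in
omit [Fintype F] in
lemma theta_pow_ne_one : θ^(q-1) ≠ 1 := by
  intro h
  apply hθ
  have h1 : θ^(q-1) * θ = θ^q := by
    rw [← pow_succ, (nat_ids hk hq).1]
  rw [h, one_mul] at h1
  exact h1.symm

include hq in
omit [Fintype F] in
lemma rf_eq : rf q θ = (sf q θ)^q + sf q θ := by
  subst hq
  rw [rf, sf, add_pow_char_pow (p := 2), ← pow_mul, ← pow_mul, ← pow_add]
  rw [show k + k = 2*k by ring, show (2:ℕ)^(2*k) = (2^k)^2 by rw [← pow_mul]; ring_nf]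
  have h20 : (2:F) = 0 := CharTwo.two_eq_zero
  linear_combination (-θ^(2^k)) * h20

-- key identity for the companion root z' = θ^(q-1) * z
include hn hodd hk hq hcard hθ in
lemma zkey : (zf q n θ)^q * (θ^(q^2-1) + 1) = θ^(q-1) + 1 := by
  obtain ⟨e1, e2, e3, e4, h2q⟩ := nat_ids hk hq
  have hrθ : rf q θ * θ ≠ 0 :=
    mul_ne_zero (hr_ne hodd hk hq hcard hθ) (theta_ne hk hq hθ)
  apply mul_left_cancel₀ hrθ
  have hzr : (zf q n θ)^q * rf q θ = sf q θ := hz_pow_q hn hodd hk hq hcard hθ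
  have hp1 : θ^(q^2-1) * θ = θ^(q^2) := by rw [← pow_succ, e2]
  have hp2 : θ^(q-1) * θ = θ^q := by rw [← pow_succ, e1]
  calc rf q θ * θ * ((zf q n θ)^q * (θ^(q^2-1) + 1))
      = ((zf q n θ)^q * rf q θ) * (θ^(q^2-1) * θ + θ) := by ring
    _ = sf q θ * (θ^(q^2) + θ) := by rw [hzr, hp1]
    _ = sf q θ * rf q θ := by rw [rf]
    _ = rf q θ * (θ^(q-1) * θ + θ) := by rw [hp2, sf]; ring
    _ = rf q θ * θ * (θ^(q-1) + 1) := by ring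

-- z' satisfies the same x-equation
include hn hodd hk hq hcard hθ in
lemma zprime_eq : (θ^(q-1) * zf q n θ)^(q+1) + θ^(q-1) * zf q n θ = psi q n θ := by
  obtain ⟨e1, e2, e3, e4, h2q⟩ := nat_ids hk hq
  have hkey := zkey hn hodd hk hq hcard hθ
  have h2 : (zf q n θ) * ((zf q n θ)^q * (θ^(q^2-1) + 1)) = (zf q n θ) * (θ^(q-1) + 1) := by
    rw [hkey]
  have hzz : zf q n θ * (zf q n θ)^q = (zf q n θ)^(q+1) := by
    rw [← pow_succ']
  have hθpow : (θ^(q-1))^(q+1) = θ^(q^2-1) := by rw [← pow_mul, e3]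
  have h20 : (2:F) = 0 := CharTwo.two_eq_zero
  rw [psi, mul_pow, hθpow]
  linear_combination h2 + (θ^(q-1) * zf q n θ - (zf q n θ)^(q+1)) * h20

end Main
end Core3

namespace Core4
open Core Core2 Core3

variable {F : Type*} [Field F] [Fintype F]

section Main

variable [CharP F 2] {n k : ℕ} (hn : 1 < n) (hodd : Odd n) (hk : 1 ≤ k)
variable {q : ℕ} (hq : q = 2^k) (hcard : Fintype.card F = q^n)
variable {θ : F} (hθ : θ^q ≠ θ)

omit [Fintype F] in
include hq in
lemma pele {w x : F} (hw : w^(q+1) + w = x) (i : ℕ) :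
    w^(efun q (i+3)) = w^(efun q (i+2)) + x^(q^(i+1)) * w^(efun q (i+1)) := by
  have h20 : (2:F) = 0 := CharTwo.two_eq_zero
  have hqe : q^(i+1) = 2^(k*(i+1)) := by subst hq; rw [← pow_mul]
  have hBC : w^(q^(i+2)) * w^(q^(i+1)) + w^(q^(i+1)) = x^(q^(i+1)) := by
    calc w^(q^(i+2)) * w^(q^(i+1)) + w^(q^(i+1))
        = (w^(q+1))^(q^(i+1)) + w^(q^(i+1)) := by
          rw [← pow_mul, ← pow_add, show (q+1) * q^(i+1) = q^(i+2) + q^(i+1) by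
            rw [Nat.add_mul, one_mul, ← pow_succ']]
      _ = (w^(q+1) + w)^(q^(i+1)) := by
          rw [hqe, add_pow_char_pow (p := 2)]
      _ = x^(q^(i+1)) := by rw [hw]
  have he3 : efun q (i+3) = efun q (i+1) + q^(i+1) + q^(i+2) := by
    rw [show efun q (i+3) = efun q (i+2) + q^(i+2) from rfl,
      show efun q (i+2) = efun q (i+1) + q^(i+1) from rfl]
  have he2 : efun q (i+2) = efun q (i+1) + q^(i+1) := rfl
  rw [he3, he2, pow_add, pow_add, pow_add]
  linear_combination w^(efun q (i+1)) * hBC - w^(efun q (i+1)) * w^(q^(i+1)) * h20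

include hn hodd hk hq hcard hθ in
lemma closed_form : ∀ i,
    ((zf q n θ + θ^(q-1) * zf q n θ) * B k (psi q n θ) (i+1)
      = (zf q n θ)^(efun q (i+1)) + (θ^(q-1) * zf q n θ)^(efun q (i+1))) ∧
    ((zf q n θ + θ^(q-1) * zf q n θ) * B k (psi q n θ) (i+2)
      = (zf q n θ)^(efun q (i+2)) + (θ^(q-1) * zf q n θ)^(efun q (i+2))) := by
  have h20 : (2:F) = 0 := CharTwo.two_eq_zero
  set z := zf q n θ with hzdef
  set zp := θ^(q-1) * zf q n θ with hzpdef
  set x := psi q n θ with hxdef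
  have hx : z^(q+1) + z = x := rfl
  have hx' : zp^(q+1) + zp = x := zprime_eq hn hodd hk hq hcard hθ
  intro i
  induction i with
  | zero =>
    constructor
    · show (z + zp) * B k x 1 = z^(efun q 1) + zp^(efun q 1)
      rw [show B k x 1 = 1 from rfl, show efun q 1 = 1 by simp [efun]]
      simp
    · show (z + zp) * B k x 2 = z^(efun q 2) + zp^(efun q 2)
      rw [show B k x 2 = 1 from rfl, show efun q 2 = q + 1 by simp [efun]; ring,
        char2_rearr _ _ _ hx, char2_rearr _ _ _ hx']
      have hxx := CharTwo.add_self_eq_zero x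
      linear_combination -hxx
  | succ m ih =>
    obtain ⟨h1, h2⟩ := ih
    refine ⟨h2, ?_⟩
    have hB : B k x (m+3) = B k x (m+2) + x^(2^((m+1)*k)) * B k x (m+1) := rfl
    have hexp : (2:ℕ)^((m+1)*k) = q^(m+1) := by subst hq; rw [← pow_mul]; ring_nf
    have p1 : z^(efun q (m+3)) = z^(efun q (m+2)) + x^(q^(m+1)) * z^(efun q (m+1)) :=
      pele hq hx m
    have p2 : zp^(efun q (m+3)) = zp^(efun q (m+2)) + x^(q^(m+1)) * zp^(efun q (m+1)) :=
      pele hq hx' m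
    rw [hB, hexp]
    linear_combination h2 + x^(q^(m+1)) * h1 + p1 + p2
      + (x^(q^(m+1)) * (z^(efun q (m+1)) + zp^(efun q (m+1)))
          + z^(efun q (m+2)) + zp^(efun q (m+2))
          - (z^(efun q (m+3)) + zp^(efun q (m+3)))) * h20

end Main
end Core4

namespace Core5
open Core Core2 Core3 Core4

lemma efun_key (q : ℕ) : ∀ i, efun q i * q + 1 = efun q i + q^i := by
  intro i
  induction i with
  | zero => simp [efun]
  | succ m ih =>
    have h1 : (efun q m + q^m) * q + 1 = (efun q m * q + 1) + q^m * q := by ring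
    rw [show efun q (m+1) = efun q m + q^m from rfl, h1, ih, pow_succ]

variable {F : Type*} [Field F] [Fintype F]

section Main

variable [CharP F 2] {n k : ℕ} (hn : 1 < n) (hodd : Odd n) (hk : 1 ≤ k)
variable {q : ℕ} (hq : q = 2^k) (hcard : Fintype.card F = q^n)
variable {θ : F} (hθ : θ^q ≠ θ)

include hn hodd hk hq hcard hθ in
lemma norm_one : θ^((q-1) * efun q n) = 1 := by
  have hθ0 : θ ≠ 0 := theta_ne hk hq hθ
  have h1 : θ^(efun q n * q) * θ = θ^(efun q n) * θ := by
    rw [← pow_succ, efun_key q n, pow_add, pow_qn q hcard]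
  have h2 : θ^(efun q n * q) = θ^(efun q n) := mul_right_cancel₀ hθ0 h1
  have h3 : θ^((q-1) * efun q n) * θ^(efun q n) = θ^(efun q n) := by
    rw [← pow_add, show (q-1) * efun q n + efun q n = efun q n * q by
      have := (nat_ids hk hq).1
      calc (q-1) * efun q n + efun q n = ((q-1)+1) * efun q n := by ring
        _ = q * efun q n := by rw [this]
        _ = efun q n * q := by ring]
    exact h2
  have h4 := mul_right_cancel₀ (pow_ne_zero (efun q n) hθ0) (h3.trans (one_mul _).symm)
  exact h4

include hn hodd hk hq hcard hθ in
lemma B_psi_zero : B k (psi q n θ) n = 0 := by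
  obtain ⟨m, rfl⟩ : ∃ m, n = m + 1 := ⟨n - 1, by omega⟩
  have hcf := (closed_form hn hodd hk hq hcard hθ m).1
  set z := zf q (m+1) θ with hzdef
  set zp := θ^(q-1) * zf q (m+1) θ with hzpdef
  have hzp_pow : zp^(efun q (m+1)) = z^(efun q (m+1)) := by
    rw [hzpdef, mul_pow, ← pow_mul, norm_one hn hodd hk hq hcard hθ, one_mul]
  rw [hzp_pow] at hcf
  have hrhs : z^(efun q (m+1)) + z^(efun q (m+1)) = 0 := CharTwo.add_self_eq_zero _
  rw [hrhs] at hcf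
  have hne : z + zp ≠ 0 := by
    rw [hzpdef, hzdef]
    have : zf q (m+1) θ + θ^(q-1) * zf q (m+1) θ = zf q (m+1) θ * (1 + θ^(q-1)) := by ring
    rw [this]
    exact mul_ne_zero (hz_ne hn hodd hk hq hcard hθ)
      (char2_ne_zero_of_ne (fun h => (theta_pow_ne_one hk hq hθ) h.symm))
  exact (mul_eq_zero.mp hcf).resolve_left hne

end Main
end Core5

namespace Core6
open Core Core2 Core3 Core4 Core5

variable {F : Type*} [Field F] [Fintype F]

section Main

variable [CharP F 2] {n k : ℕ} (hn : 1 < n) (hodd : Odd n) (hk : 1 ≤ k)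
variable {q : ℕ} (hq : q = 2^k) (hcard : Fintype.card F = q^n)
variable {θ : F} (hθ : θ^q ≠ θ)

include hn hodd hk hq hcard hθ in
lemma psi_pow_q : (psi q n θ)^q * (rf q θ)^(q+1) = (sf q θ)^(q^2+1) := by
  have h20 : (2:F) = 0 := CharTwo.two_eq_zero
  set z := zf q n θ
  set s := sf q θ
  set r := rf q θ
  have hρ : z^q * r = s := hz_pow_q hn hodd hk hq hcard hθ
  have hqq : ∀ a b : F, (a + b)^q = a^q + b^q := by
    intro a b
    rw [hq]
    exact add_pow_char_pow a b 2 k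
  have hpsiq : (psi q n θ)^q = (z^q)^(q+1) + z^q := by
    rw [psi, hqq, ← pow_mul, ← pow_mul, mul_comm (q+1) q]
  have hρ1 : (z^q * r)^(q+1) = s^(q+1) := by rw [hρ]
  have hrq : r^q = s^(q^2) + s^q := by
    rw [show r = s^q + s from rf_eq hq, hqq, ← pow_mul, ← pow_two]
  have hA : s * s^(q^2) = s^(q^2+1) := by rw [← pow_succ']
  have hB : s * s^q = s^(q+1) := by rw [← pow_succ']
  rw [hpsiq]
  linear_combination hρ1 + r^q * hρ + s * hrq + hA - hB
    + (s^(q+1) - (z^q)^(q+1) * r^(q+1) + z^q * z^(q^2) * r * r^q) * h20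

include hn hodd hk hq hcard hθ in
lemma fiber_eval :
    (sf q θ)^(q^2-q) + (psi q n θ)^q * ((sf q θ)^(q-1) + 1)^(q+1) = 0 := by
  obtain ⟨e1, e2, e3, e4, h2q⟩ := nat_ids hk hq (k := k) (q := q)
  have h20 : (2:F) = 0 := CharTwo.two_eq_zero
  set s := sf q θ with hsdef
  have hs : s ≠ 0 := hs_ne hθ
  have hmul : ((sf q θ)^(q^2-q) + (psi q n θ)^q * ((sf q θ)^(q-1) + 1)^(q+1)) * s^(q+1)
      = 0 * s^(q+1) := by
    have hterm1 : s^(q^2-q) * s^(q+1) = s^(q^2+1) := by rw [← pow_add, e4]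
    have hterm2 : ((s^(q-1) + 1) * s)^(q+1) = (rf q θ)^(q+1) := by
      have : (s^(q-1) + 1) * s = s^q + s := by
        have hss : s^(q-1) * s = s^q := by rw [← pow_succ, e1]
        linear_combination hss
      rw [this, ← rf_eq hq]
    have hpp := psi_pow_q hn hodd hk hq hcard hθ
    have hmp : ((s^(q-1) + 1))^(q+1) * s^(q+1) = ((s^(q-1) + 1) * s)^(q+1) :=
      (mul_pow _ _ _).symm
    calc ((sf q θ)^(q^2-q) + (psi q n θ)^q * ((sf q θ)^(q-1) + 1)^(q+1)) * s^(q+1)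
        = s^(q^2-q) * s^(q+1) + (psi q n θ)^q * ((s^(q-1) + 1)^(q+1) * s^(q+1)) := by
          rw [← hsdef]; ring
      _ = s^(q^2+1) + (psi q n θ)^q * (rf q θ)^(q+1) := by
          rw [hterm1, hmp, hterm2]
      _ = s^(q^2+1) + s^(q^2+1) := by rw [hpp]
      _ = 0 * s^(q+1) := by rw [CharTwo.add_self_eq_zero, zero_mul]
  exact mul_right_cancel₀ (pow_ne_zero _ hs) hmul

end Main
end Core6

namespace Core7
open Core Core2 Core3 Core4 Core5 Core6

variable {F : Type*} [Field F] [Fintype F]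

-- generic root-count bound
lemma card_filter_roots_le (p : Polynomial F) (hp : p ≠ 0) [DecidableEq F] :
    (Finset.univ.filter fun x : F => p.eval x = 0).card ≤ p.natDegree := by
  have hsub : (Finset.univ.filter fun x : F => p.eval x = 0) ⊆ p.roots.toFinset := by
    intro x hx
    simp only [Finset.mem_filter] at hx
    rw [Multiset.mem_toFinset, Polynomial.mem_roots hp]
    exact hx.2
  exact le_trans (Finset.card_le_card hsub)
    (le_trans (Multiset.toFinset_card_le _) (Polynomial.card_roots' p))

section Main

variable [CharP F 2] {n k : ℕ} (hn : 1 < n) (hodd : Odd n) (hk : 1 ≤ k)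
variable {q : ℕ} (hq : q = 2^k) (hcard : Fintype.card F = q^n)

omit [Fintype F] [CharP F 2] in
include hq hk in
lemma XqX_monic : ((Polynomial.X)^q + Polynomial.X : Polynomial F).Monic ∧
    ((Polynomial.X)^q + Polynomial.X : Polynomial F).natDegree = q := by
  have h2 : 2 ≤ q := two_le_q hk q hq
  have hdlt : (Polynomial.X : Polynomial F).degree < ((Polynomial.X)^q : Polynomial F).degree := by
    rw [Polynomial.degree_X, Polynomial.degree_X_pow]
    exact_mod_cast h2.trans_lt' one_lt_two
  have hM : ((Polynomial.X)^q + Polynomial.X : Polynomial F).Monic :=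
    (Polynomial.monic_X_pow q).add_of_left hdlt
  have hdeg : ((Polynomial.X)^q + Polynomial.X : Polynomial F).degree = q := by
    rw [Polynomial.degree_add_eq_left_of_degree_lt hdlt, Polynomial.degree_X_pow]
  exact ⟨hM, Polynomial.natDegree_eq_of_degree_eq_some hdeg⟩

end Main
end Core7

namespace Core8
open Core Core2 Core3 Core4 Core5 Core6 Core7 Polynomial

variable {F : Type*} [Field F] [Fintype F]

noncomputable def H2 (q : ℕ) (a : F) : Polynomial F :=
  (X^q + X)^(q^2-q) + C (a^q) * ((X^q + X)^(q-1) + 1)^(q+1)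

section Main

variable [CharP F 2] {n k : ℕ} (hn : 1 < n) (hodd : Odd n) (hk : 1 ≤ k)
variable {q : ℕ} (hq : q = 2^k) (hcard : Fintype.card F = q^n)

include hq hk in
lemma nat_ids2 : (q^2-q)*q = q^3-q^2 ∧ (q+1)*((q-1)*q) = q^3-q ∧
    q^3-q^2 < q^3-q ∧ 0 < q^3 - q := by
  have h2 : 2 ≤ q := two_le_q hk q hq
  obtain ⟨j, rfl⟩ : ∃ j, q = j+2 := ⟨q-2, by omega⟩
  have e1 : (j+2)^2 = j*j+4*j+4 := by ring
  have e2 : (j+2)^3 = j*j*j + 6*(j*j) + 12*j + 8 := by ring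
  have e3 : (j+2-1)*(j+2) = j*j+3*j+2 := by rw [show j+2-1 = j+1 from rfl]; ring
  have e4 : ((j+2)^2 - (j+2))*(j+2) = (j+2)^2*(j+2) - (j+2)*(j+2) := Nat.sub_mul _ _ _
  have e5 : (j+2)^2*(j+2) = (j+2)^3 := by ring
  have e6 : (j+2)*(j+2) = j*j+4*j+4 := by ring
  have e7 : (j+2+1)*((j+2-1)*(j+2)) = (j*j*j) + 6*(j*j) + 11*j + 6 := by
    rw [show j+2-1 = j+1 from rfl]; ring
  refine ⟨by omega, by omega, by omega, by omega⟩

include hq hk in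
lemma H2_props (a : F) (ha : a ≠ 0) :
    H2 q a ≠ 0 ∧ (H2 q a).natDegree ≤ q^3 - q := by
  obtain ⟨f1, f2, f3, f4⟩ := nat_ids2 hk hq (q := q)
  obtain ⟨e1, e2, e3, e4, h2q⟩ := nat_ids hk hq (k := k) (q := q)
  obtain ⟨hM, hMdeg⟩ := XqX_monic hk hq (F := F) (q := q)
  set W : Polynomial F := X^q + X with hW
  -- T1
  have hT1deg : (W^(q^2-q)).natDegree = q^3 - q^2 := by
    rw [Polynomial.natDegree_pow, hMdeg, f1]
  -- U + 1
  have hUM : (W^(q-1)).Monic := hM.pow _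
  have hUdeg : (W^(q-1)).natDegree = (q-1)*q := by
    rw [Polynomial.natDegree_pow, hMdeg]
  have hUpos : 0 < (W^(q-1)).natDegree := by
    rw [hUdeg]
    have : 1 ≤ q - 1 := by omega
    nlinarith
  have hlt1 : (1 : Polynomial F).degree < (W^(q-1)).degree := by
    rw [Polynomial.degree_one]
    rw [Polynomial.degree_eq_natDegree hUM.ne_zero]
    exact_mod_cast hUpos
  have hU1M : (W^(q-1) + 1).Monic := hUM.add_of_left hlt1
  have hU1deg : (W^(q-1) + 1).natDegree = (q-1)*q := by
    rw [Polynomial.natDegree_eq_of_degree_eq_some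
      (by rw [Polynomial.degree_add_eq_left_of_degree_lt hlt1,
        Polynomial.degree_eq_natDegree hUM.ne_zero, hUdeg])]
  -- T2
  have hT2M : ((W^(q-1) + 1)^(q+1)).Monic := hU1M.pow _
  have hT2deg : ((W^(q-1) + 1)^(q+1)).natDegree = q^3 - q := by
    rw [Polynomial.natDegree_pow, hU1deg, f2]
  constructor
  · intro h0
    have hco : (H2 q a).coeff (q^3-q) = a^q := by
      rw [show H2 q a = W^(q^2-q) + C (a^q) * ((W^(q-1) + 1)^(q+1)) from rfl,
        Polynomial.coeff_add, Polynomial.coeff_C_mul]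
      rw [Polynomial.coeff_eq_zero_of_natDegree_lt (by rw [hT1deg]; exact f3)]
      rw [← hT2deg, hT2M.coeff_natDegree]
      ring
    rw [h0] at hco
    simp only [Polynomial.coeff_zero] at hco
    exact pow_ne_zero q ha hco.symm
  · rw [show H2 q a = W^(q^2-q) + C (a^q) * ((W^(q-1) + 1)^(q+1)) from rfl]
    refine le_trans (Polynomial.natDegree_add_le _ _) (max_le ?_ ?_)
    · rw [hT1deg]; omega
    · refine le_trans (Polynomial.natDegree_C_mul_le _ _) ?_
      rw [hT2deg]

end Main
end Core8

namespace Core9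
open Core Core2 Core3 Core4 Core5 Core6 Core7 Core8 Polynomial

variable {F : Type*} [Field F] [Fintype F]

lemma B_zero_eq_one (k : ℕ) : ∀ i, B k (0 : F) i = 1 := by
  have key : ∀ i, (B k (0:F) i = 1) ∧ (B k (0:F) (i+1) = 1) ∧ (B k (0:F) (i+2) = 1) := by
    intro i
    induction i with
    | zero => refine ⟨rfl, rfl, rfl⟩
    | succ m ih =>
      obtain ⟨h0, h1, h2⟩ := ih
      refine ⟨h1, h2, ?_⟩
      show B k (0:F) (m+2) + (0:F) ^ (2 ^ ((m + 1) * k)) * B k (0:F) (m+1) = 1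
      rw [h1, h2, zero_pow (Nat.two_pow_pos _).ne']
      ring
  exact fun i => (key i).1

section Main

variable [CharP F 2] {n k : ℕ} (hn : 1 < n) (hodd : Odd n) (hk : 1 ≤ k)
variable {q : ℕ} (hq : q = 2^k) (hcard : Fintype.card F = q^n)

include hn hodd hk hq hcard in
lemma fiber_bound [DecidableEq F] (a : F) (ha : a ≠ 0) :
    ((Finset.univ.filter fun θ : F => θ^q ≠ θ) |>.filter fun θ => psi q n θ = a).card
      ≤ q^3 - q := by
  obtain ⟨hH2ne, hH2deg⟩ := H2_props hk hq a ha
  have hsub : ((Finset.univ.filter fun θ : F => θ^q ≠ θ) |>.filter fun θ => psi q n θ = a)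
      ⊆ (H2 q a).roots.toFinset := by
    intro θ hθmem
    simp only [Finset.mem_filter, Finset.mem_univ, true_and] at hθmem
    obtain ⟨hθ, hpsi⟩ := hθmem
    have hfe := fiber_eval hn hodd hk hq hcard hθ
    rw [hpsi] at hfe
    have heval : (H2 q a).eval θ = 0 := by
      rw [show H2 q a = (X^q+X)^(q^2-q) + C (a^q) * ((X^q+X)^(q-1) + 1)^(q+1) from rfl]
      simp only [Polynomial.eval_add, Polynomial.eval_mul, Polynomial.eval_pow,
        Polynomial.eval_C, Polynomial.eval_X, Polynomial.eval_one]
      rw [show sf q θ = θ^q + θ from rfl] at hfe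
      linear_combination hfe
    rw [Multiset.mem_toFinset, Polynomial.mem_roots hH2ne]
    exact heval
  exact le_trans (Finset.card_le_card hsub)
    (le_trans (le_trans (Multiset.toFinset_card_le _) (Polynomial.card_roots' _)) hH2deg)

end Main
end Core9


section Final
open Stmt2Aux Stmt2Aux2 Core Core2 Core3 Core4 Core5 Core6 Core7 Core8 Core9 Polynomial

theorem stmt2 (n k : ℕ) (hn : 1 < n) (hodd : Odd n) (hk : 1 ≤ k)
    (F : Type*) [Field F] [Fintype F] (hF : Fintype.card F = 2 ^ (n * k)) :
    Nat.card {x : F // B k x n = 0} = (2 ^ ((n - 1) * k) - 1) / (2 ^ (2 * k) - 1) := by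
  classical
  -- characteristic 2
  obtain ⟨m, hp2, hm⟩ := FiniteField.card F (ringChar F)
  have hchar2 : ringChar F = 2 := by
    have hdvd : ringChar F ∣ 2 ^ (n * k) := by
      rw [← hF, hm]
      exact dvd_pow_self _ (by positivity)
    exact (Nat.prime_dvd_prime_iff_eq hp2 Nat.prime_two).mp
      (Nat.Prime.dvd_of_dvd_pow hp2 hdvd)
  haveI : CharP F 2 := by
    have := ringChar.charP F
    rwa [hchar2] at this
  have hq : (2:ℕ)^k = 2^k := rfl
  set q : ℕ := 2^k with hqdef
  have hq' : q = 2^k := rfl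
  have hcard : Fintype.card F = q^n := by
    rw [hF, hqdef, ← pow_mul, mul_comm]
  have h2q : 2 ≤ q := two_le_q hk q hq'
  set Z := Finset.univ.filter fun x : F => B k x n = 0 with hZ
  -- upper bound
  have hup : Z.card ≤ dfun k n := by
    have hZsub : Z ⊆ Finset.univ.filter fun x : F => (Pol k F n).eval x = 0 := by
      intro x hx
      simp only [hZ, Finset.mem_filter, Finset.mem_univ, true_and] at hx ⊢
      have := B_eq_pol k x n
      rw [hx] at this
      exact (pow_eq_zero_iff (Nat.two_pow_pos k).ne').mp this.symm
    exact le_trans (Finset.card_le_card hZsub)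
      (le_trans (card_filter_roots_le _ (pol_ne_zero k n)) (pol_deg k n))
  -- lower bound via psi
  set S := Finset.univ.filter fun θ : F => θ^q ≠ θ with hS
  have hmaps : ∀ θ ∈ S, psi q n θ ∈ Z := by
    intro θ hθ
    simp only [hS, Finset.mem_filter, Finset.mem_univ, true_and] at hθ
    simp only [hZ, Finset.mem_filter, Finset.mem_univ, true_and]
    exact B_psi_zero hn hodd hk hq' hcard hθ
  have hfib : ∀ b ∈ Z, (S.filter fun θ => psi q n θ = b).card ≤ q^3 - q := by
    intro b hb
    have hbne : b ≠ 0 := by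
      intro h0
      simp only [hZ, Finset.mem_filter, Finset.mem_univ, true_and] at hb
      rw [h0, B_zero_eq_one k n] at hb
      exact one_ne_zero hb
    exact fiber_bound hn hodd hk hq' hcard b hbne
  have hcount : S.card ≤ (q^3 - q) * Z.card :=
    Finset.card_le_mul_card_image_of_maps_to hmaps _ hfib
  -- |S| ≥ q^n - q
  have hScard : q^n - q ≤ S.card := by
    have hsplit := Finset.card_filter_add_card_filter_not
      (s := (Finset.univ : Finset F)) (p := fun θ : F => θ^q = θ)
    rw [Finset.card_univ, hcard] at hsplit
    have hT : (Finset.univ.filter fun θ : F => θ^q = θ).card ≤ q := by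
      obtain ⟨hM, hMdeg⟩ := XqX_monic hk hq' (F := F) (q := q)
      have hsub : (Finset.univ.filter fun θ : F => θ^q = θ)
          ⊆ Finset.univ.filter fun θ : F => (X^q + X : Polynomial F).eval θ = 0 := by
        intro θ hθ
        simp only [Finset.mem_filter, Finset.mem_univ, true_and] at hθ ⊢
        rw [Polynomial.eval_add, Polynomial.eval_pow, Polynomial.eval_X]
        exact char2_add_eq_zero _ _ hθ
      exact le_trans (Finset.card_le_card hsub)
        (le_trans (card_filter_roots_le _ hM.ne_zero) (le_of_eq hMdeg))
    have hSalt : S.card = (Finset.univ.filter fun θ : F => ¬(θ^q = θ)).card := rfl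
    omega
  -- arithmetic
  obtain ⟨m2, hm2⟩ := hodd
  have hdf : dfun k n * (2^(2*k) - 1) = 2^((n-1)*k) - 1 := by
    have h2 : (n-1)*k = 2*m2*k := by rw [hm2, Nat.add_sub_cancel]
    rw [h2, hm2]
    exact dfun_odd k m2
  have hq2pos : 0 < 2^(2*k) - 1 := by
    have h1 : (2:ℕ)^(2*k) = q^2 := by rw [hqdef, ← pow_mul, mul_comm]
    have h2 : 4 ≤ q^2 := by nlinarith
    omega
  have hE : (2^((n-1)*k) - 1) / (2^(2*k) - 1) = dfun k n :=
    Nat.div_eq_of_eq_mul_left hq2pos hdf.symm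
  have hkey : dfun k n * (q^3 - q) = q^n - q := by
    have h1 : q^3 - q = (2^(2*k) - 1) * q := by
      rw [Nat.sub_mul, one_mul, show (2:ℕ)^(2*k) = q^2 by rw [hqdef, ← pow_mul, mul_comm],
        ← pow_succ]
    have h2 : (2^((n-1)*k) - 1) * q = q^n - q := by
      rw [Nat.sub_mul, one_mul, show (2:ℕ)^((n-1)*k) = q^(n-1) by
        rw [hqdef, ← pow_mul, mul_comm], ← pow_succ, Nat.sub_add_cancel (by omega)]
    rw [h1, ← mul_assoc, hdf, h2]
  have hpos3 : 0 < q^3 - q := by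
    have h1 : q^3 = q*q*q := by ring
    have h2 : 2*2*q ≤ q*q*q := by nlinarith
    omega
  have hlow : dfun k n ≤ Z.card := by
    have h1 : dfun k n * (q^3 - q) ≤ Z.card * (q^3 - q) := by
      rw [hkey, mul_comm (Z.card)]
      exact le_trans hScard hcount
    exact Nat.le_of_mul_le_mul_right h1 hpos3
  have hZc : Z.card = dfun k n := le_antisymm hup hlow
  rw [Nat.card_eq_fintype_card, Fintype.card_subtype, hE]
  exact hZc

end Final
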